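/- A vector (u, v, z̃_0, …, z̃_s) ∈ ℤ^{s+3} with all coordinates nonnegative satisfies u + v = Σ_{t=0}^{s} N_t z̃_t if and only if it is an ℕ-linear combination of the vectors w(t,δ) for t ∈ {0,…,s} and δ ∈ {0,…,N_t}. (This is the description of the ray generators of the toric fan of the subvariety X_Γ: the lattice points of the cone on the polytope Π̃ are exactly the ℕ-span of the w(t,δ).) -/

import Mathlib

/-- `N_t = #γ⁻¹(t)`, the size of the `t`-th piece of the partition encoded by `γ`. -/
def Nt (k s : ℕ) (γ : Fin (k + 1) → Fin (s + 1)) (t : Fin (s + 1)) : ℕ :=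
  (Finset.univ.filter fun j => γ j = t).card

/-- The vector `w(t,δ) ∈ ℤ^{s+3}` with `u = δ`, `v = N_t − δ`, `z̃_t = 1`, rest `0`.
Elements of `ℤ^{s+3}` are written as `ℤ × ℤ × (Fin (s+1) → ℤ)` with coordinates
`(u, v, z̃)`. -/
def wvec (k s : ℕ) (γ : Fin (k + 1) → Fin (s + 1)) (t : Fin (s + 1)) (δ : ℕ) :
    ℤ × ℤ × (Fin (s + 1) → ℤ) :=
  ((δ : ℤ), (Nt k s γ t : ℤ) - (δ : ℤ), fun r => if r = t then 1 else 0)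

lemma lemA {ι : Type*} [DecidableEq ι] (s : Finset ι) (A : ι → ℕ) :
    ∀ u : ℕ, u ≤ ∑ i ∈ s, A i →
    ∃ a : ι → ℕ, (∀ i, a i ≤ A i) ∧ ∑ i ∈ s, a i = u := by
  induction s using Finset.induction_on with
  | empty => intro u hu; exact ⟨0, fun i => Nat.zero_le _, by simp at hu ⊢; omega⟩
  | @insert i s' hi ih =>
    intro u hu
    rw [Finset.sum_insert hi] at hu
    obtain ⟨a, ha, hsum⟩ := ih (u - min u (A i)) (by omega)
    refine ⟨Function.update a i (min u (A i)), fun j => ?_, ?_⟩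
    · rcases eq_or_ne j i with rfl | h
      · simp only [Function.update_self]; omega
      · simp only [Function.update_of_ne h]; exact ha j
    · rw [Finset.sum_insert hi, Function.update_self,
        Finset.sum_congr rfl fun j hj => Function.update_of_ne (fun h : j = i => hi (h ▸ hj)) _ a, hsum]
      omega


lemma lemB (N : ℕ) (hN : 1 ≤ N) : ∀ z a : ℕ, a ≤ N * z →
    ∃ c : Fin (N + 1) → ℕ, (∑ δ, c δ) = z ∧ (∑ δ : Fin (N + 1), (δ : ℕ) * c δ) = a := by
  intro z
  induction z with
  | zero =>
    intro a ha
    refine ⟨0, by simp, by simp; omega⟩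
  | succ z ih =>
    intro a ha
    rw [Nat.mul_succ] at ha
    by_cases h : a ≤ N
    · refine ⟨fun δ => (if δ = (⟨a, by omega⟩ : Fin (N + 1)) then 1 else 0)
        + (if δ = (⟨0, by omega⟩ : Fin (N + 1)) then z else 0), ?_, ?_⟩
      · rw [Finset.sum_add_distrib]
        rw [Finset.sum_ite_eq' Finset.univ, Finset.sum_ite_eq' Finset.univ]
        simp [Finset.sum_ite_eq']; omega
      · simp only [Nat.mul_add, Finset.sum_add_distrib, mul_ite, mul_one, mul_zero]
        rw [Finset.sum_ite_eq' Finset.univ, Finset.sum_ite_eq' Finset.univ]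
        simp
    · obtain ⟨c, hc1, hc2⟩ := ih (a - N) (by omega)
      refine ⟨fun δ => c δ + (if δ = (⟨N, by omega⟩ : Fin (N + 1)) then 1 else 0), ?_, ?_⟩
      · rw [Finset.sum_add_distrib, hc1]; simp [Finset.sum_ite_eq']
      · simp only [Nat.mul_add, Finset.sum_add_distrib, hc2, mul_ite, mul_one, mul_zero]
        rw [Finset.sum_ite_eq' Finset.univ]
        simp; omega

lemma comp (k s : ℕ) (γ : Fin (k + 1) → Fin (s + 1))
    (c : (t : Fin (s + 1)) → Fin (Nt k s γ t + 1) → ℕ) :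
    (∑ t, ∑ δ, c t δ • wvec k s γ t (δ : ℕ)) =
    (∑ t, ∑ δ : Fin (Nt k s γ t + 1), (c t δ : ℤ) * (δ : ℕ),
     ∑ t, ∑ δ : Fin (Nt k s γ t + 1), (c t δ : ℤ) * ((Nt k s γ t : ℤ) - (δ : ℕ)),
     fun r => ∑ δ : Fin (Nt k s γ r + 1), (c r δ : ℤ)) := by
  refine Prod.ext ?_ (Prod.ext ?_ ?_)
  · simp [Prod.fst_sum, wvec, nsmul_eq_mul]
  · simp [Prod.snd_sum, Prod.fst_sum, wvec, nsmul_eq_mul]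
  · funext r
    simp only [Prod.snd_sum, Prod.smul_snd, wvec, Finset.sum_apply, Pi.smul_apply, smul_ite,
      smul_zero]
    simp only [nsmul_eq_mul, mul_one, Finset.sum_ite_irrel, Finset.sum_const_zero]
    rw [Finset.sum_ite_eq Finset.univ r (fun t => ∑ δ : Fin (Nt k s γ t + 1), (c t δ : ℤ))]
    simp

/-- A nonnegative vector `(u, v, z̃_0, …, z̃_s)` satisfies `u + v = Σ_t N_t z̃_t` iff it is
an ℕ-linear combination of the vectors `w(t,δ)`, `t ∈ {0,…,s}`, `δ ∈ {0,…,N_t}`. -/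
theorem stmt6 (k s : ℕ) (hk : 1 ≤ k) (γ : Fin (k + 1) → Fin (s + 1))
    (hγ : Function.Surjective γ) (x : ℤ × ℤ × (Fin (s + 1) → ℤ)) :
    (0 ≤ x.1 ∧ 0 ≤ x.2.1 ∧ (∀ t, 0 ≤ x.2.2 t) ∧
        x.1 + x.2.1 = ∑ t, (Nt k s γ t : ℤ) * x.2.2 t) ↔
      ∃ c : (t : Fin (s + 1)) → Fin (Nt k s γ t + 1) → ℕ,
        x = ∑ t, ∑ δ, c t δ • wvec k s γ t (δ : ℕ) := by
  have hpos : ∀ t, 1 ≤ Nt k s γ t := by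
    intro t
    obtain ⟨j, hj⟩ := hγ t
    exact Finset.card_pos.mpr ⟨j, by simp [hj]⟩
  obtain ⟨xu, xv, xz⟩ := x
  simp only
  constructor
  · rintro ⟨hu, hv, hz, hsum⟩
    set u := xu.toNat with hudef
    set z := fun t => (xz t).toNat with hzdef
    have hxu : xu = (u : ℤ) := (Int.toNat_of_nonneg hu).symm
    have hxz : ∀ t, xz t = (z t : ℤ) := fun t => (Int.toNat_of_nonneg (hz t)).symm
    have hUV : (u : ℤ) + xv = ∑ t, ((Nt k s γ t * z t : ℕ) : ℤ) := by
      rw [← hxu, hsum]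
      exact Finset.sum_congr rfl fun t _ => by rw [hxz]; push_cast; ring
    have hule : u ≤ ∑ t, Nt k s γ t * z t := by
      have : (u : ℤ) ≤ ∑ t, ((Nt k s γ t * z t : ℕ) : ℤ) := by omega
      rw [← Nat.cast_sum] at this
      exact_mod_cast this
    obtain ⟨a, ha, hasum⟩ := lemA Finset.univ (fun t => Nt k s γ t * z t) u hule
    choose c hc1 hc2 using fun t => lemB (Nt k s γ t) (hpos t) (z t) (a t) (ha t)
    refine ⟨c, ?_⟩
    rw [comp]
    have key1 : ∀ t, ∑ δ : Fin (Nt k s γ t + 1), (c t δ : ℤ) * ((δ : ℕ) : ℤ) = (a t : ℤ) := by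
      intro t; rw [← hc2 t]; push_cast
      exact Finset.sum_congr rfl fun δ _ => mul_comm _ _
    have key0 : ∀ t, ∑ δ : Fin (Nt k s γ t + 1), (c t δ : ℤ) = (z t : ℤ) := by
      intro t; rw [← hc1 t]; push_cast; rfl
    have key2 : ∀ t, ∑ δ : Fin (Nt k s γ t + 1), (c t δ : ℤ) * ((Nt k s γ t : ℤ) - (δ : ℕ))
        = ((Nt k s γ t * z t : ℕ) : ℤ) - a t := by
      intro t
      have : ∑ δ : Fin (Nt k s γ t + 1), (c t δ : ℤ) * ((Nt k s γ t : ℤ) - (δ : ℕ))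
          = (∑ δ : Fin (Nt k s γ t + 1), (c t δ : ℤ)) * (Nt k s γ t : ℤ)
            - ∑ δ : Fin (Nt k s γ t + 1), (c t δ : ℤ) * ((δ : ℕ) : ℤ) := by
        rw [Finset.sum_mul, ← Finset.sum_sub_distrib]
        exact Finset.sum_congr rfl fun δ _ => by ring
      rw [this, key0, key1]; push_cast; ring
    refine Prod.ext ?_ (Prod.ext ?_ ?_)
    · simp only [Finset.sum_congr rfl fun t _ => key1 t]
      rw [hxu, ← Nat.cast_sum, hasum]
    · simp only [Finset.sum_congr rfl fun t _ => key2 t]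
      rw [Finset.sum_sub_distrib]
      have hA : (∑ x, (a x : ℤ)) = (u : ℤ) := by rw [← Nat.cast_sum, hasum]
      omega
    · funext r
      simp only [Finset.sum_congr rfl fun t _ => key0 t]  -- no-op; direct
      exact (hxz r).trans (key0 r).symm
  · rintro ⟨c, h⟩
    rw [comp, Prod.mk.injEq, Prod.mk.injEq] at h
    obtain ⟨h1, h2, h3⟩ := h
    subst h1; subst h2; subst h3
    refine ⟨?_, ?_, ?_, ?_⟩
    · exact Finset.sum_nonneg fun t _ => Finset.sum_nonneg fun δ _ => by positivity
    · refine Finset.sum_nonneg fun t _ => Finset.sum_nonneg fun δ _ => ?_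
      have : ((δ : ℕ) : ℤ) ≤ (Nt k s γ t : ℤ) := by exact_mod_cast Nat.lt_succ_iff.mp δ.isLt
      have h0 : (0:ℤ) ≤ (c t δ : ℤ) := by positivity
      nlinarith
    · intro t
      exact Finset.sum_nonneg fun δ _ => by positivity
    · rw [← Finset.sum_add_distrib]
      refine Finset.sum_congr rfl fun t _ => ?_
      rw [← Finset.sum_add_distrib, Finset.mul_sum]
      exact Finset.sum_congr rfl fun δ _ => by ring
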